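/- For positive integers a, b, c, the following product-formula identity holds: prod_{i=2}^{a} ( (b+c+i-1)! · (i-1)! ) / ( (b+i-1)! · (c+i-1)! ) = ( prod_{i=1}^{a} prod_{j=1}^{b} prod_{k=1}^{c} (i+j+k-1)/(i+j+k-2) ) · ( (1)_c / (b+1)_c ). -/

import Mathlib

/-- The Pochhammer symbol `(x)_k = x(x+1)⋯(x+k-1)`, `(x)_0 = 1`. -/
def poch (x : ℚ) (k : ℕ) : ℚ := ∏ i ∈ Finset.range k, (x + i)

/-- MacMahon's product `∏_{i=1}^{a} ∏_{j=1}^{b} ∏_{k=1}^{c} (i+j+k-1)/(i+j+k-2)`. -/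
def macmahon (a b c : ℕ) : ℚ :=
  ∏ i ∈ Finset.range a, ∏ j ∈ Finset.range b, ∏ k ∈ Finset.range c,
    (((i : ℚ) + j + k + 2) / ((i : ℚ) + j + k + 1))

lemma poch_succ (x : ℚ) (k : ℕ) : poch x (k+1) = poch x k * (x + k) :=
  Finset.prod_range_succ _ _

lemma poch_nat (n : ℕ) : ∀ b : ℕ, poch ((n:ℚ)+1) b = ((n+b).factorial : ℚ) / (n.factorial : ℚ)
  | 0 => by simp [poch, div_self (show ((n.factorial:ℚ)) ≠ 0 by positivity)]
  | (b+1) => by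
      rw [poch_succ, poch_nat n b]
      have h : ((n.factorial : ℚ)) ≠ 0 := by positivity
      have : (n + (b+1)).factorial = (n+b+1) * (n+b).factorial := by
        rw [← Nat.add_assoc]; exact Nat.factorial_succ _
      rw [this]
      field_simp
      push_cast
      ring

lemma telescope (x : ℚ) (hx : 0 < x) : ∀ c : ℕ,
    ∏ k ∈ Finset.range c, (x + k + 1) / (x + k) = (x + c) / x
  | 0 => by simp [div_self hx.ne']
  | (c+1) => by
      rw [Finset.prod_range_succ, telescope x hx c]
      have h1 : x ≠ 0 := ne_of_gt hx
      have h2 : x + (c:ℚ) ≠ 0 := by positivity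
      field_simp
      push_cast
      ring

lemma block (i b c : ℕ) :
    (∏ j ∈ Finset.range b, ∏ k ∈ Finset.range c,
      (((i : ℚ) + j + k + 2) / ((i : ℚ) + j + k + 1)))
    = ((i+b+c).factorial : ℚ) * (i.factorial : ℚ)
        / (((i+b).factorial : ℚ) * ((i+c).factorial : ℚ)) := by
  have hstep : ∀ j ∈ Finset.range b,
      (∏ k ∈ Finset.range c, (((i : ℚ) + j + k + 2) / ((i : ℚ) + j + k + 1)))
        = (((i:ℚ) + j + 1) + c) / ((i:ℚ) + j + 1) := by
    intro j _
    have hx : (0:ℚ) < (i:ℚ) + j + 1 := by positivity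
    have := telescope ((i:ℚ) + j + 1) hx c
    rw [← this]
    exact Finset.prod_congr rfl (fun k _ => by ring_nf)
  rw [Finset.prod_congr rfl hstep, Finset.prod_div_distrib]
  have e1 : (∏ j ∈ Finset.range b, (((i:ℚ) + j + 1) + c)) = poch (((i+c:ℕ):ℚ)+1) b := by
    unfold poch
    exact Finset.prod_congr rfl (fun j _ => by push_cast; ring)
  have e2 : (∏ j ∈ Finset.range b, ((i:ℚ) + j + 1)) = poch ((i:ℚ)+1) b := by
    unfold poch
    exact Finset.prod_congr rfl (fun j _ => by ring)
  rw [e1, e2, poch_nat, poch_nat]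
  have h1 : ((i.factorial : ℚ)) ≠ 0 := by positivity
  have h2 : (((i+c).factorial : ℚ)) ≠ 0 := by positivity
  have h3 : (((i+b).factorial : ℚ)) ≠ 0 := by positivity
  have : (i + c + b) = (i + b + c) := by ring
  rw [this]
  field_simp

/-- For positive integers `a, b, c`:
`∏_{i=2}^{a} ((b+c+i-1)! (i-1)!)/((b+i-1)! (c+i-1)!)
  = (∏_{i,j,k} (i+j+k-1)/(i+j+k-2)) · ((1)_c/(b+1)_c)`. -/
theorem factorial_product_identity (a b c : ℕ) (ha : 0 < a) (hb : 0 < b) (hc : 0 < c) :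
    ∏ i ∈ Finset.Icc 2 a,
        ((Nat.factorial (b + c + i - 1) : ℚ) * (Nat.factorial (i - 1) : ℚ)) /
          ((Nat.factorial (b + i - 1) : ℚ) * (Nat.factorial (c + i - 1) : ℚ)) =
      macmahon a b c * (poch 1 c / poch ((b : ℚ) + 1) c) := by
  have hp1 : poch 1 c = (c.factorial : ℚ) := by
    have := poch_nat 0 c
    simpa using this
  have hpb : poch ((b:ℚ)+1) c = ((b+c).factorial : ℚ) / (b.factorial : ℚ) := poch_nat b c
  have hbf : ((b.factorial : ℚ)) ≠ 0 := by positivity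
  have hcf : ((c.factorial : ℚ)) ≠ 0 := by positivity
  have hbcf : (((b+c).factorial : ℚ)) ≠ 0 := by positivity
  induction a with
  | zero => omega
  | succ a ih =>
    rcases Nat.eq_zero_or_pos a with rfl | ha2'
    · -- a + 1 = 1
      simp only [Nat.reduceAdd]
      rw [show Finset.Icc 2 1 = ∅ from rfl, Finset.prod_empty]
      unfold macmahon
      rw [Finset.prod_range_one, block 0 b c, hp1, hpb]
      simp only [Nat.zero_add, Nat.factorial_zero]
      field_simp
      ring
    · rw [Finset.prod_Icc_succ_top (by omega : 2 ≤ a + 1), ih ha2']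
      have hm : macmahon (a+1) b c = macmahon a b c *
          (((a+b+c).factorial : ℚ) * (a.factorial : ℚ)
            / (((a+b).factorial : ℚ) * ((a+c).factorial : ℚ))) := by
        unfold macmahon
        rw [Finset.prod_range_succ, block a b c]
      rw [hm]
      have e1 : b + c + (a+1) - 1 = a + b + c := by omega
      have e2 : a + 1 - 1 = a := by omega
      have e3 : b + (a+1) - 1 = a + b := by omega
      have e4 : c + (a+1) - 1 = a + c := by omega
      rw [e1, e2, e3, e4]
      ring
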